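/- (Distribution of the time to ruin, zero initial surplus.) Assume λ_{ij}(0) > 0 for all i,j ∈ E, Λ(0) is invertible, and the environment chain is stationary with distribution π. With initial surplus x = 0, the matrix of ruin-time probabilities (with (i,j)-entry the probability of {τ_0^− = n, J_n = j} started from state i) satisfies: P(τ_0^− = 1, J_1) = P − Λ(0), and for every n > 1, P(τ_0^− = n, J_n) = Σ_{x=1}^{n−1} V(n−1, x)·P − Σ_{x=1}^{n} V(n, x). -/

import Mathlib

open scoped BigOperators

noncomputable section

namespace CMB

/-- The weight that the compound Markov binomial model with horizon `n`, jump matrices `Λ`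
and initial distribution `μ` assigns to the path `(J, C)`. -/
def pathWeight {N : ℕ} (Λ : ℕ → Matrix (Fin N) (Fin N) ℝ) (μ : Fin N → ℝ) (n : ℕ)
    (J : Fin (n + 1) → Fin N) (C : Fin n → ℕ) : ℝ :=
  μ (J 0) * ∏ k : Fin n, Λ (C k) (J k.castSucc) (J k.succ)

/-- The probability of the event `A` in the horizon-`n` compound Markov binomial model:
the sum of the weights of the paths belonging to the event. -/
def prob {N : ℕ} (Λ : ℕ → Matrix (Fin N) (Fin N) ℝ) (μ : Fin N → ℝ) (n : ℕ)
    (A : (Fin (n + 1) → Fin N) → (Fin n → ℕ) → Prop) : ℝ :=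
  ∑' p : { p : (Fin (n + 1) → Fin N) × (Fin n → ℕ) // A p.1 p.2 },
    pathWeight Λ μ n p.1.1 p.1.2

/-- Partial sums `S_k = C_1 + ⋯ + C_k` of the claims (`C i` is claim number `i+1`). -/
def S {n : ℕ} (C : Fin n → ℕ) (k : ℕ) : ℕ :=
  ∑ j : Fin n, if (j : ℕ) < k then C j else 0

/-- Dirac initial distribution `δ_i`. -/
def delta {N : ℕ} (i : Fin N) : Fin N → ℝ := fun i' => if i' = i then 1 else 0

/-- `hitM Λ n a i j` is the probability, in the model with initial distribution `δ_i` and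
initial surplus `x = 0` (so `X_k = k - S_k`), of the event `{τ_a^+ = n, J_n = j}`,
i.e. `X_k < a` for all `k < n` and `X_n ≥ a` and `J_n = j`. -/
def hitM {N : ℕ} (Λ : ℕ → Matrix (Fin N) (Fin N) ℝ) (n a : ℕ) : Matrix (Fin N) (Fin N) ℝ :=
  fun i j => prob Λ (delta i) n fun J C =>
    (∀ k, k < n → (k : ℤ) - S C k < (a : ℤ)) ∧ (a : ℤ) ≤ (n : ℤ) - S C n ∧ J (Fin.last n) = j

/-- Jump matrices `Λ̃(m)`, with `λ̃_{ij}(m) = (π_j/π_i)·λ_{ji}(m)`, of the time-reversed model. -/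
def lamTilde {N : ℕ} (Λ : ℕ → Matrix (Fin N) (Fin N) ℝ) (π : Fin N → ℝ) :
    ℕ → Matrix (Fin N) (Fin N) ℝ := fun m i j => π j / π i * Λ m j i

/-- `V(n,a) := Δ_π⁻¹ · M̃(n,a)ᵀ · Δ_π`, where `M̃(n,a)` is the matrix of first-passage
probabilities of the time-reversed model. -/
def Vmat {N : ℕ} (Λ : ℕ → Matrix (Fin N) (Fin N) ℝ) (π : Fin N → ℝ) (n a : ℕ) :
    Matrix (Fin N) (Fin N) ℝ := fun i j => π j / π i * hitM (lamTilde Λ π) n a j i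

/-- `ruinM Λ x n i j` is the probability of `{τ_0^- = n, J_n = j}` started from state `i`
with initial surplus `x` (so `X_k = x + k - S_k`): `X_k > 0` for `1 ≤ k < n` and `X_n ≤ 0`. -/
def ruinM {N : ℕ} (Λ : ℕ → Matrix (Fin N) (Fin N) ℝ) (x : ℕ) (n : ℕ) :
    Matrix (Fin N) (Fin N) ℝ := fun i j => prob Λ (delta i) n fun J C =>
      (∀ k, 1 ≤ k → k < n → 0 < (x : ℤ) + k - S C k) ∧
      (x : ℤ) + n - S C n ≤ 0 ∧ J (Fin.last n) = j

section Aux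

variable {N : ℕ}

/-- The full path space. -/
abbrev Path (N n : ℕ) := (Fin (n + 1) → Fin N) × (Fin n → ℕ)

lemma delta_nonneg (i i' : Fin N) : 0 ≤ delta i i' := by
  unfold delta; split_ifs <;> norm_num

lemma pathWeight_nonneg {Λ : ℕ → Matrix (Fin N) (Fin N) ℝ} (hΛ : ∀ m i j, 0 ≤ Λ m i j)
    {μ : Fin N → ℝ} (hμ : ∀ i, 0 ≤ μ i) (n : ℕ) (J : Fin (n + 1) → Fin N) (C : Fin n → ℕ) :
    0 ≤ pathWeight Λ μ n J C :=
  mul_nonneg (hμ _) (Finset.prod_nonneg fun _ _ => hΛ _ _ _)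

lemma summable_pi_prod : ∀ {n : ℕ} (f : Fin n → ℕ → ℝ), (∀ k c, 0 ≤ f k c) →
    (∀ k, Summable (f k)) → Summable (fun C : Fin n → ℕ => ∏ k, f k (C k)) := by
  intro n
  induction n with
  | zero => intro f _ _; exact Summable.of_finite
  | succ n ih =>
    intro f h0 hs
    have ha : (0 : ℕ → ℝ) ≤ f 0 := Pi.le_def.mpr fun c => h0 0 c
    have hb : (0 : (Fin n → ℕ) → ℝ) ≤ fun C : Fin n → ℕ => ∏ k : Fin n, f k.succ (C k) :=
      Pi.le_def.mpr fun C => Finset.prod_nonneg fun _ _ => h0 _ _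
    have hsb : Summable (fun C : Fin n → ℕ => ∏ k : Fin n, f k.succ (C k)) :=
      ih (fun k => f k.succ) (fun k c => h0 _ _) (fun k => hs _)
    have hg : Summable (fun p : ℕ × (Fin n → ℕ) =>
        f 0 p.1 * ∏ k : Fin n, f k.succ (p.2 k)) :=
      @Summable.mul_of_nonneg ℕ (Fin n → ℕ) (f 0)
        (fun C => ∏ k : Fin n, f k.succ (C k)) (hs 0) hsb ha hb
    have h2 := (Equiv.summable_iff (Fin.consEquiv (fun _ : Fin (n + 1) => ℕ)).symm).2 hg
    refine h2.congr fun C => ?_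
    simp [Function.comp, Fin.prod_univ_succ, Fin.tail]

lemma summable_pathWeight {Λ : ℕ → Matrix (Fin N) (Fin N) ℝ} (hΛ : ∀ m i j, 0 ≤ Λ m i j)
    (hΛs : ∀ i j, Summable fun m => Λ m i j) {μ : Fin N → ℝ} (hμ : ∀ i, 0 ≤ μ i) (n : ℕ) :
    Summable (fun p : Path N n => pathWeight Λ μ n p.1 p.2) := by
  refine (summable_prod_of_nonneg fun p => pathWeight_nonneg hΛ hμ n p.1 p.2).2 ⟨?_, ?_⟩
  · intro J
    have h := summable_pi_prod (fun k c => Λ c (J k.castSucc) (J k.succ))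
      (fun k c => hΛ _ _ _) (fun k => hΛs _ _)
    exact Summable.mul_left
      (f := fun C : Fin n → ℕ => ∏ k : Fin n, Λ (C k) (J k.castSucc) (J k.succ)) (μ (J 0)) h
  · exact Summable.of_finite

lemma prob_eq_tsum_indicator (Λ : ℕ → Matrix (Fin N) (Fin N) ℝ) (μ : Fin N → ℝ) (n : ℕ)
    (A : (Fin (n + 1) → Fin N) → (Fin n → ℕ) → Prop) :
    prob Λ μ n A = ∑' p : Path N n,
      Set.indicator {p : Path N n | A p.1 p.2} (fun p => pathWeight Λ μ n p.1 p.2) p := by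
  unfold prob
  exact tsum_subtype {p : Path N n | A p.1 p.2} (fun p => pathWeight Λ μ n p.1 p.2)

lemma summable_indicator_event {Λ : ℕ → Matrix (Fin N) (Fin N) ℝ} (hΛ : ∀ m i j, 0 ≤ Λ m i j)
    (hΛs : ∀ i j, Summable fun m => Λ m i j) {μ : Fin N → ℝ} (hμ : ∀ i, 0 ≤ μ i) (n : ℕ)
    (s : Set (Path N n)) :
    Summable (s.indicator (fun p : Path N n => pathWeight Λ μ n p.1 p.2)) :=
  (summable_pathWeight hΛ hΛs hμ n).indicator s

end Aux

section Aux2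

variable {N : ℕ}

lemma S_zero {n : ℕ} (C : Fin n → ℕ) : S C 0 = 0 := by
  unfold S; simp

lemma S_rev {n : ℕ} (C : Fin n → ℕ) (k : ℕ) (hk : k ≤ n) :
    S (fun j => C j.rev) k + S C (n - k) = S C n := by
  unfold S
  have h1 : (∑ j : Fin n, if (j : ℕ) < k then C j.rev else 0)
      = ∑ j : Fin n, if ((j.rev : Fin n) : ℕ) < k then C j else 0 := by
    refine Fintype.sum_equiv Fin.revPerm _ _ fun x => ?_
    simp [Fin.rev_rev]
  rw [h1, ← Finset.sum_add_distrib]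
  refine Finset.sum_congr rfl fun j _ => ?_
  have hj : (j : ℕ) < n := j.isLt
  have hrev : ((j.rev : Fin n) : ℕ) = n - 1 - (j : ℕ) := by
    rw [Fin.val_rev]; omega
  rw [hrev]
  split_ifs <;> omega

lemma S_init {m : ℕ} (C : Fin (m + 1) → ℕ) (k : ℕ) (hk : k ≤ m) :
    S (Fin.init C) k = S C k := by
  unfold S
  rw [Fin.sum_univ_castSucc (f := fun j : Fin (m+1) => if (j : ℕ) < k then C j else 0)]
  have : ¬ ((Fin.last m : ℕ) < k) := by simp [Fin.last]; omega
  simp only [this, if_false, add_zero, Fin.coe_castSucc]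
  exact Finset.sum_congr rfl fun j _ => by simp [Fin.init]

lemma prod_ratio {n : ℕ} (g : Fin (n + 1) → ℝ) (hg : ∀ x, g x ≠ 0) :
    ∏ k : Fin n, g k.succ / g k.castSucc = g (Fin.last n) / g 0 := by
  induction n with
  | zero => simp [Fin.last, div_self (hg 0)]
  | succ n ih =>
    rw [Fin.prod_univ_castSucc]
    have h1 : ∀ k : Fin n, g k.castSucc.succ / g k.castSucc.castSucc
        = (g ∘ Fin.castSucc) k.succ / (g ∘ Fin.castSucc) k.castSucc := by
      intro k; simp [Function.comp]
    rw [Finset.prod_congr rfl (fun k _ => h1 k), ih (g ∘ Fin.castSucc) (fun x => hg _)]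
    simp only [Function.comp, Fin.succ_last]
    rw [div_mul_div_comm]
    rw [mul_comm (g (Fin.last n).castSucc) _]
    rw [mul_div_mul_right _ _ (hg (Fin.last n).castSucc)]
    rfl

/-- Reversal of paths. -/
def pathRev {N n : ℕ} : Path N n ≃ Path N n where
  toFun p := (fun k => p.1 k.rev, fun k => p.2 k.rev)
  invFun p := (fun k => p.1 k.rev, fun k => p.2 k.rev)
  left_inv p := by simp [Fin.rev_rev]
  right_inv p := by simp [Fin.rev_rev]

lemma pathWeight_snoc {Λ : ℕ → Matrix (Fin N) (Fin N) ℝ} (μ : Fin N → ℝ) (m : ℕ)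
    (J : Fin (m + 1) → Fin N) (C : Fin m → ℕ) (l : Fin N) (c : ℕ) :
    pathWeight Λ μ (m + 1) (Fin.snoc J l) (Fin.snoc C c) =
      pathWeight Λ μ m J C * Λ c (J (Fin.last m)) l := by
  unfold pathWeight
  rw [Fin.prod_univ_castSucc]
  have h0 : (Fin.snoc J l : Fin (m+2) → Fin N) 0 = J 0 := by
    rw [show (0 : Fin (m+2)) = Fin.castSucc 0 by rfl, Fin.snoc_castSucc]
  have hterm : ∀ k : Fin m,
      Λ ((Fin.snoc C c : Fin (m+1) → ℕ) k.castSucc)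
        ((Fin.snoc J l : Fin (m+2) → Fin N) k.castSucc.castSucc)
        ((Fin.snoc J l : Fin (m+2) → Fin N) k.castSucc.succ)
        = Λ (C k) (J k.castSucc) (J k.succ) := by
    intro k
    rw [Fin.snoc_castSucc, Fin.snoc_castSucc, Fin.succ_castSucc, Fin.snoc_castSucc]
  have hlast : Λ ((Fin.snoc C c : Fin (m+1) → ℕ) (Fin.last m))
      ((Fin.snoc J l : Fin (m+2) → Fin N) (Fin.last m).castSucc)
      ((Fin.snoc J l : Fin (m+2) → Fin N) (Fin.last m).succ) = Λ c (J (Fin.last m)) l := by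
    rw [Fin.snoc_last, Fin.snoc_castSucc, Fin.succ_last, Fin.snoc_last]
  rw [Finset.prod_congr rfl (fun k _ => hterm k), hlast, h0]
  ring

/-- Splitting off the last step of a path. -/
def pathSnocEquiv {N m : ℕ} : Path N (m + 1) ≃ (Path N m) × (Fin N × ℕ) where
  toFun p := ((Fin.init p.1, Fin.init p.2), (p.1 (Fin.last (m + 1)), p.2 (Fin.last m)))
  invFun q := (Fin.snoc q.1.1 q.2.1, Fin.snoc q.1.2 q.2.2)
  left_inv p := by simp [Fin.snoc_init_self]
  right_inv q := by simp [Fin.init_snoc, Fin.snoc_last]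

end Aux2

section Rev

variable {N : ℕ} {Λ : ℕ → Matrix (Fin N) (Fin N) ℝ} {π : Fin N → ℝ}

lemma Vmat_eq_prob (hπpos : ∀ x, 0 < π x) (n a : ℕ) (i j : Fin N) :
    Vmat Λ π n a i j = prob Λ (delta i) n (fun J C =>
      (∀ k, k < n → (k : ℤ) - ((S C n : ℤ) - (S C (n - k) : ℤ)) < (a : ℤ)) ∧
      (a : ℤ) ≤ (n : ℤ) - S C n ∧ J (Fin.last n) = j) := by
  have hne : ∀ x, π x ≠ 0 := fun x => (hπpos x).ne'
  show π j / π i * prob (lamTilde Λ π) (delta j) n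
      (fun J C => (∀ k, k < n → (k : ℤ) - S C k < (a : ℤ)) ∧
        (a : ℤ) ≤ (n : ℤ) - S C n ∧ J (Fin.last n) = i) = _
  rw [prob_eq_tsum_indicator, prob_eq_tsum_indicator, ← tsum_mul_left]
  have hEq := Equiv.tsum_eq (pathRev (N := N) (n := n))
      (fun p : Path N n => π j / π i *
        Set.indicator {q : Path N n | (∀ k, k < n → (k : ℤ) - S q.2 k < (a : ℤ)) ∧
            (a : ℤ) ≤ (n : ℤ) - S q.2 n ∧ q.1 (Fin.last n) = i}
          (fun q => pathWeight (lamTilde Λ π) (delta j) n q.1 q.2) p)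
  rw [← hEq]
  refine tsum_congr fun p => ?_
  obtain ⟨J, C⟩ := p
  have hrev : pathRev (N := N) (n := n) (J, C) =
      (fun k => J k.rev, fun k => C k.rev) := rfl
  set Jr : Fin (n + 1) → Fin N := fun k => J k.rev with hJrdef
  set Cr : Fin n → ℕ := fun k => C k.rev with hCrdef
  have hS : ∀ k, k ≤ n → (S Cr k : ℤ) = (S C n : ℤ) - (S C (n - k) : ℤ) := by
    intro k hk
    have h := S_rev C k hk
    rw [← hCrdef] at h
    omega
  have hSn : (S Cr n : ℤ) = (S C n : ℤ) := by
    have h := hS n le_rfl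
    rw [Nat.sub_self, S_zero] at h
    simpa using h
  have hJr0 : Jr 0 = J (Fin.last n) := by
    show J (0 : Fin (n + 1)).rev = J (Fin.last n)
    rw [Fin.rev_zero]
  have hJrl : Jr (Fin.last n) = J 0 := by
    show J (Fin.last n).rev = J 0
    rw [Fin.rev_last]
  have hcond : ((∀ k, k < n → (k : ℤ) - S Cr k < (a : ℤ)) ∧ (a : ℤ) ≤ (n : ℤ) - S Cr n)
      ↔ ((∀ k, k < n → (k : ℤ) - ((S C n : ℤ) - (S C (n - k) : ℤ)) < (a : ℤ)) ∧
         (a : ℤ) ≤ (n : ℤ) - S C n) := by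
    constructor
    · rintro ⟨h1, h2⟩
      refine ⟨fun k hk => ?_, ?_⟩
      · have := h1 k hk; rw [hS k hk.le] at this; exact this
      · rw [hSn] at h2; exact h2
    · rintro ⟨h1, h2⟩
      refine ⟨fun k hk => ?_, ?_⟩
      · rw [hS k hk.le]; exact h1 k hk
      · rw [hSn]; exact h2
  have hratio : ∏ k : Fin n, π (Jr k.succ) / π (Jr k.castSucc)
      = π (Jr (Fin.last n)) / π (Jr 0) := by
    simpa using prod_ratio (fun x => π (Jr x)) (fun x => hne _)
  have hprodΛ : ∏ k : Fin n, Λ (Cr k) (Jr k.succ) (Jr k.castSucc)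
      = ∏ k : Fin n, Λ (C k) (J k.castSucc) (J k.succ) := by
    refine Fintype.prod_equiv Fin.revPerm _ _ fun x => ?_
    show Λ (Cr x) (Jr x.succ) (Jr x.castSucc)
      = Λ (C x.rev) (J x.rev.castSucc) (J x.rev.succ)
    rw [hJrdef, hCrdef]
    simp only [Fin.rev_succ, Fin.rev_castSucc]
  have hw : pathWeight (lamTilde Λ π) (delta j) n Jr Cr
      = delta j (J (Fin.last n)) * (π (J 0) / π (J (Fin.last n)) *
          ∏ k : Fin n, Λ (C k) (J k.castSucc) (J k.succ)) := by
    unfold pathWeight lamTilde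
    rw [hJr0]
    congr 1
    rw [Finset.prod_mul_distrib, hratio, hprodΛ, hJrl, hJr0]
  rw [hrev]
  simp only [Set.indicator_apply, Set.mem_setOf_eq]
  by_cases hsc : (∀ k, k < n → (k : ℤ) - ((S C n : ℤ) - (S C (n - k) : ℤ)) < (a : ℤ)) ∧
      (a : ℤ) ≤ (n : ℤ) - S C n
  · by_cases hJl : J (Fin.last n) = j
    · have hmem1 : (∀ k, k < n → (k : ℤ) - S Cr k < (a : ℤ)) ∧ (a : ℤ) ≤ (n : ℤ) - S Cr n :=
        hcond.2 hsc
      by_cases hJ0 : J 0 = i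
      · rw [if_pos ⟨hmem1.1, hmem1.2, by rw [hJrl]; exact hJ0⟩,
          if_pos ⟨hsc.1, hsc.2, hJl⟩, hw]
        unfold pathWeight delta
        rw [if_pos hJl, if_pos hJ0, hJl, hJ0]
        rw [one_mul, one_mul, ← mul_assoc, div_mul_div_comm, mul_comm (π j) (π i),
          div_self (mul_ne_zero (hne i) (hne j)), one_mul]
      · rw [if_neg (fun h => hJ0 (by rw [← hJrl]; exact h.2.2)),
          if_pos ⟨hsc.1, hsc.2, hJl⟩]
        unfold pathWeight delta
        rw [if_neg hJ0]
        ring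
    · by_cases hmem' : (∀ k, k < n → (k : ℤ) - S Cr k < (a : ℤ)) ∧
          (a : ℤ) ≤ (n : ℤ) - S Cr n ∧ Jr (Fin.last n) = i
      · rw [if_pos hmem', if_neg (fun h => hJl h.2.2), hw]
        unfold delta
        rw [if_neg hJl]
        ring
      · rw [if_neg hmem', if_neg (fun h => hJl h.2.2)]
        ring
  · rw [if_neg (fun h => hsc (hcond.1 ⟨h.1, h.2.1⟩)),
      if_neg (fun h => hsc ⟨h.1, h.2.1⟩)]
    ring

end Rev

section Count

variable {N : ℕ} {Λ : ℕ → Matrix (Fin N) (Fin N) ℝ} {π : Fin N → ℝ}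

lemma sum_Vmat (hΛ : ∀ m i j, 0 ≤ Λ m i j) (hΛs : ∀ i j, Summable fun m => Λ m i j)
    (hπpos : ∀ x, 0 < π x) {n : ℕ} (hn : 1 ≤ n) (i j : Fin N) :
    ∑ a ∈ Finset.Icc 1 n, Vmat Λ π n a i j
      = prob Λ (delta i) n (fun J C =>
          (∀ k, 1 ≤ k → k ≤ n → 0 < (k : ℤ) - S C k) ∧ J (Fin.last n) = j) := by
  classical
  set w : Path N n → ℝ := fun q => pathWeight Λ (delta i) n q.1 q.2 with hwdef
  have hsummand : ∀ a : ℕ, Summable (Set.indicator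
      {q : Path N n | (∀ k, k < n → (k : ℤ) - ((S q.2 n : ℤ) - (S q.2 (n - k) : ℤ)) < (a : ℤ)) ∧
        (a : ℤ) ≤ (n : ℤ) - S q.2 n ∧ q.1 (Fin.last n) = j} w) := fun a =>
    summable_indicator_event hΛ hΛs (delta_nonneg i) n _
  have key : ∀ p : Path N n,
      (∑ a ∈ Finset.Icc 1 n, Set.indicator
        {q : Path N n | (∀ k, k < n → (k : ℤ) - ((S q.2 n : ℤ) - (S q.2 (n - k) : ℤ)) < (a : ℤ)) ∧
          (a : ℤ) ≤ (n : ℤ) - S q.2 n ∧ q.1 (Fin.last n) = j} w p)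
      = Set.indicator {q : Path N n |
          (∀ k, 1 ≤ k → k ≤ n → 0 < (k : ℤ) - S q.2 k) ∧ q.1 (Fin.last n) = j} w p := by
    rintro ⟨J, C⟩
    simp only [Set.indicator_apply, Set.mem_setOf_eq]
    by_cases hJl : J (Fin.last n) = j
    swap
    · rw [if_neg (fun h => hJl h.2)]
      exact Finset.sum_eq_zero fun a _ => if_neg (fun h => hJl h.2.2)
    by_cases hsurv : ∀ k, 1 ≤ k → k ≤ n → 0 < (k : ℤ) - S C k
    · rw [if_pos ⟨hsurv, hJl⟩]
      have hTpos : 0 < (n : ℤ) - S C n := hsurv n hn le_rfl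
      set T : ℕ := n - S C n with hT
      have hstep : ∀ a ∈ Finset.Icc 1 n,
          (if (∀ k, k < n → (k : ℤ) - ((S C n : ℤ) - (S C (n - k) : ℤ)) < (a : ℤ)) ∧
              (a : ℤ) ≤ (n : ℤ) - S C n ∧ J (Fin.last n) = j then w (J, C) else 0)
            = if a = T then w (J, C) else 0 := by
        intro a ha
        rw [Finset.mem_Icc] at ha
        by_cases h : a = T
        · rw [if_pos h, if_pos ?_]
          refine ⟨fun k hk => ?_, by omega, hJl⟩
          have h5 := hsurv (n - k) (by omega) (by omega)
          omega
        · rw [if_neg h, if_neg ?_]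
          rintro ⟨h1, h2, -⟩
          have h6 := h1 (n - 1) (by omega)
          omega
      rw [Finset.sum_congr rfl hstep, Finset.sum_ite_eq' (Finset.Icc 1 n) T]
      rw [if_pos (Finset.mem_Icc.2 (by omega))]
    · rw [if_neg (fun h => hsurv h.1)]
      refine Finset.sum_eq_zero fun a ha => if_neg ?_
      rintro ⟨h1, h2, -⟩
      rw [Finset.mem_Icc] at ha
      push_neg at hsurv
      obtain ⟨k0, hk01, hk0n, hk0⟩ := hsurv
      rcases eq_or_lt_of_le hk0n with heq | hlt
      · subst heq; omega
      · have h7 := h1 (n - k0) (by omega)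
        have h8 : n - (n - k0) = k0 := by omega
        rw [h8] at h7
        omega
  calc ∑ a ∈ Finset.Icc 1 n, Vmat Λ π n a i j
      = ∑ a ∈ Finset.Icc 1 n, ∑' p : Path N n, Set.indicator
          {q : Path N n | (∀ k, k < n → (k : ℤ) - ((S q.2 n : ℤ) - (S q.2 (n - k) : ℤ)) < (a : ℤ)) ∧
            (a : ℤ) ≤ (n : ℤ) - S q.2 n ∧ q.1 (Fin.last n) = j} w p :=
        Finset.sum_congr rfl fun a _ => by
          rw [Vmat_eq_prob hπpos, prob_eq_tsum_indicator]
    _ = ∑' p : Path N n, ∑ a ∈ Finset.Icc 1 n, Set.indicator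
          {q : Path N n | (∀ k, k < n → (k : ℤ) - ((S q.2 n : ℤ) - (S q.2 (n - k) : ℤ)) < (a : ℤ)) ∧
            (a : ℤ) ≤ (n : ℤ) - S q.2 n ∧ q.1 (Fin.last n) = j} w p :=
        (Summable.tsum_finsetSum fun a _ => hsummand a).symm
    _ = ∑' p : Path N n, Set.indicator {q : Path N n |
          (∀ k, 1 ≤ k → k ≤ n → 0 < (k : ℤ) - S q.2 k) ∧ q.1 (Fin.last n) = j} w p :=
        tsum_congr key
    _ = prob Λ (delta i) n (fun J C =>
          (∀ k, 1 ≤ k → k ≤ n → 0 < (k : ℤ) - S C k) ∧ J (Fin.last n) = j) :=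
        (prob_eq_tsum_indicator Λ (delta i) n (fun J C =>
          (∀ k, 1 ≤ k → k ≤ n → 0 < (k : ℤ) - S C k) ∧ J (Fin.last n) = j)).symm

end Count

section LastStep

variable {N : ℕ} {Λ : ℕ → Matrix (Fin N) (Fin N) ℝ}

lemma prob_last_step (hΛ : ∀ m i j, 0 ≤ Λ m i j) (hΛs : ∀ i j, Summable fun m => Λ m i j)
    (P : Matrix (Fin N) (Fin N) ℝ) (hP : ∀ l l', HasSum (fun m => Λ m l l') (P l l'))
    (m : ℕ) (i j : Fin N) :
    prob Λ (delta i) (m + 1) (fun J C =>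
        (∀ k, 1 ≤ k → k ≤ m → 0 < (k : ℤ) - S C k) ∧ J (Fin.last (m + 1)) = j)
      = ∑ l, prob Λ (delta i) m (fun J C =>
          (∀ k, 1 ≤ k → k ≤ m → 0 < (k : ℤ) - S C k) ∧ J (Fin.last m) = l) * P l j := by
  classical
  have hμ := delta_nonneg (N := N) i
  set w1 : Path N (m + 1) → ℝ := fun q => pathWeight Λ (delta i) (m + 1) q.1 q.2 with hw1
  set w0 : Path N m → ℝ := fun q => pathWeight Λ (delta i) m q.1 q.2 with hw0
  set A : Set (Path N (m + 1)) := {q | (∀ k, 1 ≤ k → k ≤ m → 0 < (k : ℤ) - S q.2 k) ∧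
    q.1 (Fin.last (m + 1)) = j} with hA
  have hFs : Summable (A.indicator w1) :=
    (summable_pathWeight hΛ hΛs hμ (m + 1)).indicator A
  have hFnn : ∀ p, 0 ≤ A.indicator w1 p := fun p =>
    Set.indicator_apply_nonneg (fun _ => pathWeight_nonneg hΛ hμ _ _ _)
  set G : (Path N m) × (Fin N × ℕ) → ℝ :=
    (A.indicator w1) ∘ (pathSnocEquiv (N := N) (m := m)).symm with hG
  have hGs : Summable G := (Equiv.summable_iff _).2 hFs
  have hGnn : (0 : (Path N m) × (Fin N × ℕ) → ℝ) ≤ G := fun q => hFnn _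
  have hG1 : ∀ q1, Summable (fun y : Fin N × ℕ => G (q1, y)) :=
    fun q1 => ((summable_prod_of_nonneg hGnn).1 hGs).1 q1
  have hG2 : ∀ q1 l, Summable (fun c : ℕ => G (q1, (l, c))) := fun q1 l =>
    ((summable_prod_of_nonneg (f := fun y : Fin N × ℕ => G (q1, y))
      (fun y => hFnn _)).1 (hG1 q1)).1 l
  have hGval : ∀ (q1 : Path N m) (l : Fin N) (c : ℕ), G (q1, (l, c)) =
      if ((∀ k, 1 ≤ k → k ≤ m → 0 < (k : ℤ) - S q1.2 k) ∧ l = j)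
        then w0 q1 * Λ c (q1.1 (Fin.last m)) l else 0 := by
    rintro ⟨J, C⟩ l c
    have hSs : ∀ k, 1 ≤ k → k ≤ m → ((S (Fin.snoc C c : Fin (m + 1) → ℕ) k : ℤ) = (S C k : ℤ)) := by
      intro k _ hk
      rw [← S_init (Fin.snoc C c) k hk, Fin.init_snoc]
    have hmem : pathSnocEquiv.symm ((J, C), (l, c)) ∈ A ↔
        ((∀ k, 1 ≤ k → k ≤ m → 0 < (k : ℤ) - S C k) ∧ l = j) := by
      show ((∀ k, 1 ≤ k → k ≤ m → 0 < (k : ℤ) - S (Fin.snoc C c : Fin (m + 1) → ℕ) k) ∧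
        (Fin.snoc J l : Fin (m + 2) → Fin N) (Fin.last (m + 1)) = j) ↔ _
      rw [Fin.snoc_last]
      constructor
      · rintro ⟨h1, h2⟩
        exact ⟨fun k hk1 hk2 => by rw [← hSs k hk1 hk2]; exact h1 k hk1 hk2, h2⟩
      · rintro ⟨h1, h2⟩
        exact ⟨fun k hk1 hk2 => by rw [hSs k hk1 hk2]; exact h1 k hk1 hk2, h2⟩
    show A.indicator w1 (pathSnocEquiv.symm ((J, C), (l, c))) = _
    rw [Set.indicator_apply]
    by_cases h : (∀ k, 1 ≤ k → k ≤ m → 0 < (k : ℤ) - S C k) ∧ l = j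
    · rw [if_pos (hmem.2 h), if_pos h]
      show pathWeight Λ (delta i) (m + 1) (Fin.snoc J l) (Fin.snoc C c) = _
      rw [pathWeight_snoc]
    · rw [if_neg (fun hh => h (hmem.1 hh)), if_neg h]
  have hinner : ∀ (q1 : Path N m) (l : Fin N), ∑' c : ℕ, G (q1, (l, c)) =
      if ((∀ k, 1 ≤ k → k ≤ m → 0 < (k : ℤ) - S q1.2 k) ∧ l = j)
        then w0 q1 * P (q1.1 (Fin.last m)) l else 0 := by
    intro q1 l
    by_cases h : (∀ k, 1 ≤ k → k ≤ m → 0 < (k : ℤ) - S q1.2 k) ∧ l = j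
    · rw [tsum_congr (fun c => by rw [hGval q1 l c, if_pos h]), tsum_mul_left,
        (hP _ _).tsum_eq, if_pos h]
    · rw [tsum_congr (fun c => by rw [hGval q1 l c, if_neg h]), tsum_zero, if_neg h]
  have hRHS : (∑ l, prob Λ (delta i) m (fun J C =>
      (∀ k, 1 ≤ k → k ≤ m → 0 < (k : ℤ) - S C k) ∧ J (Fin.last m) = l) * P l j)
      = ∑' q1 : Path N m, (if (∀ k, 1 ≤ k → k ≤ m → 0 < (k : ℤ) - S q1.2 k)
          then w0 q1 * P (q1.1 (Fin.last m)) j else 0) := by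
    calc (∑ l, prob Λ (delta i) m (fun J C =>
        (∀ k, 1 ≤ k → k ≤ m → 0 < (k : ℤ) - S C k) ∧ J (Fin.last m) = l) * P l j)
        = ∑ l, ∑' q1 : Path N m, Set.indicator
            {q : Path N m | (∀ k, 1 ≤ k → k ≤ m → 0 < (k : ℤ) - S q.2 k) ∧
              q.1 (Fin.last m) = l} w0 q1 * P l j := by
          refine Finset.sum_congr rfl fun l _ => ?_
          rw [prob_eq_tsum_indicator]
          exact tsum_mul_right.symm
      _ = ∑' q1 : Path N m, ∑ l, Set.indicator
            {q : Path N m | (∀ k, 1 ≤ k → k ≤ m → 0 < (k : ℤ) - S q.2 k) ∧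
              q.1 (Fin.last m) = l} w0 q1 * P l j :=
          (Summable.tsum_finsetSum fun l _ =>
            (((summable_pathWeight hΛ hΛs hμ m).indicator _).mul_right _)).symm
      _ = ∑' q1 : Path N m, (if (∀ k, 1 ≤ k → k ≤ m → 0 < (k : ℤ) - S q1.2 k)
            then w0 q1 * P (q1.1 (Fin.last m)) j else 0) := by
          refine tsum_congr fun q1 => ?_
          by_cases h : ∀ k, 1 ≤ k → k ≤ m → 0 < (k : ℤ) - S q1.2 k
          · rw [Finset.sum_congr rfl (fun l _ => show _ = if q1.1 (Fin.last m) = l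
                then w0 q1 * P l j else 0 from by
              simp only [Set.indicator_apply, Set.mem_setOf_eq, ite_mul, zero_mul]
              by_cases hl : q1.1 (Fin.last m) = l
              · rw [if_pos ⟨h, hl⟩, if_pos hl]
              · rw [if_neg (fun hh => hl hh.2), if_neg hl]),
              Finset.sum_ite_eq Finset.univ (q1.1 (Fin.last m)),
              if_pos (Finset.mem_univ _), if_pos h]
          · rw [if_neg h]
            exact Finset.sum_eq_zero fun l _ => by
              simp only [Set.indicator_apply, Set.mem_setOf_eq, ite_mul, zero_mul]
              exact if_neg (fun hh => h hh.1)
  rw [prob_eq_tsum_indicator, hRHS]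
  calc (∑' p : Path N (m + 1), A.indicator w1 p)
      = ∑' q, G q := (Equiv.tsum_eq (pathSnocEquiv (N := N) (m := m)).symm (A.indicator w1)).symm
    _ = ∑' q1 : Path N m, ∑' y : Fin N × ℕ, G (q1, y) := Summable.tsum_prod' hGs hG1
    _ = ∑' q1 : Path N m, ∑' l : Fin N, ∑' c : ℕ, G (q1, (l, c)) :=
        tsum_congr fun q1 => Summable.tsum_prod' (hG1 q1) (hG2 q1)
    _ = ∑' q1 : Path N m, ∑ l : Fin N, ∑' c : ℕ, G (q1, (l, c)) :=
        tsum_congr fun q1 => tsum_fintype _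
    _ = ∑' q1 : Path N m, (if (∀ k, 1 ≤ k → k ≤ m → 0 < (k : ℤ) - S q1.2 k)
          then w0 q1 * P (q1.1 (Fin.last m)) j else 0) := by
        refine tsum_congr fun q1 => ?_
        rw [Finset.sum_congr rfl (fun l _ => hinner q1 l)]
        by_cases h : ∀ k, 1 ≤ k → k ≤ m → 0 < (k : ℤ) - S q1.2 k
        · rw [if_pos h, Finset.sum_congr rfl (fun l _ => show _ = if l = j
              then w0 q1 * P (q1.1 (Fin.last m)) l else 0 from by
            by_cases hl : l = j
            · rw [if_pos ⟨h, hl⟩, if_pos hl]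
            · rw [if_neg (fun hh : (_ ∧ _) => hl hh.2), if_neg hl]),
            Finset.sum_ite_eq' Finset.univ j, if_pos (Finset.mem_univ j)]
        · rw [if_neg h]
          exact Finset.sum_eq_zero (fun l _ => if_neg (fun hh : (_ ∧ _) => h hh.1))

lemma prob_split (hΛ : ∀ m i j, 0 ≤ Λ m i j) (hΛs : ∀ i j, Summable fun m => Λ m i j)
    (m : ℕ) (i j : Fin N) :
    prob Λ (delta i) (m + 1) (fun J C =>
        (∀ k, 1 ≤ k → k ≤ m → 0 < (k : ℤ) - S C k) ∧ J (Fin.last (m + 1)) = j)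
      = ruinM Λ 0 (m + 1) i j
        + prob Λ (delta i) (m + 1) (fun J C =>
            (∀ k, 1 ≤ k → k ≤ m + 1 → 0 < (k : ℤ) - S C k) ∧ J (Fin.last (m + 1)) = j) := by
  classical
  have hμ := delta_nonneg (N := N) i
  have hruin : ruinM Λ 0 (m + 1) i j = prob Λ (delta i) (m + 1) (fun J C =>
      (∀ k, 1 ≤ k → k < m + 1 → 0 < ((0 : ℕ) : ℤ) + k - S C k) ∧
      ((0 : ℕ) : ℤ) + (m + 1 : ℕ) - S C (m + 1) ≤ 0 ∧ J (Fin.last (m + 1)) = j) := rfl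
  rw [hruin, prob_eq_tsum_indicator, prob_eq_tsum_indicator, prob_eq_tsum_indicator,
    ← Summable.tsum_add (summable_indicator_event hΛ hΛs hμ (m + 1) _)
      (summable_indicator_event hΛ hΛs hμ (m + 1) _)]
  refine tsum_congr fun p => ?_
  obtain ⟨J, C⟩ := p
  simp only [Set.indicator_apply, Set.mem_setOf_eq]
  by_cases hJl : J (Fin.last (m + 1)) = j
  swap
  · rw [if_neg (fun h => hJl h.2), if_neg (fun h => hJl h.2.2), if_neg (fun h => hJl h.2)]
    ring
  by_cases hc : ∀ k, 1 ≤ k → k ≤ m → 0 < (k : ℤ) - S C k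
  · rw [if_pos ⟨hc, hJl⟩]
    by_cases hx : ((m + 1 : ℕ) : ℤ) - S C (m + 1) ≤ 0
    · rw [if_pos ⟨fun k hk1 hk2 => by have := hc k hk1 (by omega); omega,
        by push_cast; push_cast at hx; omega, hJl⟩]
      rw [if_neg (fun h => by have := h.1 (m + 1) (by omega) le_rfl; omega)]
      ring
    · rw [if_neg (fun h => hx (by have := h.2.1; push_cast; push_cast at this; omega))]
      rw [if_pos ⟨fun k hk1 hk2 => by
        rcases Nat.lt_or_ge k (m + 1) with h' | h'
        · have := hc k hk1 (by omega); omega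
        · have hk : k = m + 1 := by omega
          subst hk; omega, hJl⟩]
      ring
  · rw [if_neg (fun h => hc h.1),
      if_neg (fun h => hc (fun k hk1 hk2 => by have := h.1 k hk1 (by omega); omega)),
      if_neg (fun h => hc (fun k hk1 hk2 => h.1 k hk1 (by omega)))]
    ring

end LastStep

section One

variable {N : ℕ} {Λ : ℕ → Matrix (Fin N) (Fin N) ℝ}

lemma tail_tsum (hΛ : ∀ m i j, 0 ≤ Λ m i j) (hΛs : ∀ i j, Summable fun m => Λ m i j)
    (P : Matrix (Fin N) (Fin N) ℝ) (hP : ∀ l l', HasSum (fun m => Λ m l l') (P l l'))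
    (l l' : Fin N) :
    ∑' c : ℕ, (if 1 ≤ c then Λ c l l' else 0) = P l l' - Λ 0 l l' := by
  classical
  have hsum : Summable (fun c : ℕ => if 1 ≤ c then Λ c l l' else 0) := by
    refine Summable.of_nonneg_of_le (fun c => ?_) (fun c => ?_) (hΛs l l')
    · split_ifs
      exacts [hΛ _ _ _, le_rfl]
    · split_ifs
      exacts [le_rfl, hΛ _ _ _]
  rw [Summable.tsum_eq_zero_add hsum, if_neg (by omega : ¬ (1 : ℕ) ≤ 0), zero_add,
    tsum_congr (fun c : ℕ => if_pos (by omega : (1 : ℕ) ≤ c + 1))]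
  have h3 := Summable.tsum_eq_zero_add (hΛs l l')
  rw [(hP l l').tsum_eq] at h3
  linarith

lemma ruinM_one (hΛ : ∀ m i j, 0 ≤ Λ m i j) (hΛs : ∀ i j, Summable fun m => Λ m i j)
    (P : Matrix (Fin N) (Fin N) ℝ) (hP : ∀ l l', HasSum (fun m => Λ m l l') (P l l'))
    (i j : Fin N) :
    ruinM Λ 0 1 i j = P i j - Λ 0 i j := by
  classical
  have hμ := delta_nonneg (N := N) i
  have hr : ruinM Λ 0 1 i j = prob Λ (delta i) 1 (fun J C =>
      (∀ k, 1 ≤ k → k < 1 → 0 < ((0 : ℕ) : ℤ) + k - S C k) ∧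
      ((0 : ℕ) : ℤ) + (1 : ℕ) - S C 1 ≤ 0 ∧ J (Fin.last 1) = j) := rfl
  rw [hr, prob_eq_tsum_indicator]
  set A : Set (Path N 1) := {q : Path N 1 |
    (∀ k, 1 ≤ k → k < 1 → 0 < ((0 : ℕ) : ℤ) + k - S q.2 k) ∧
    ((0 : ℕ) : ℤ) + (1 : ℕ) - S q.2 1 ≤ 0 ∧ q.1 (Fin.last 1) = j} with hA
  set w : Path N 1 → ℝ := fun q => pathWeight Λ (delta i) 1 q.1 q.2 with hw
  set e : (Fin 2 → Fin N) × ℕ ≃ Path N 1 :=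
    Equiv.prodCongr (Equiv.refl (Fin 2 → Fin N)) (Equiv.funUnique (Fin 1) ℕ).symm with he
  have hFs : Summable (A.indicator w) := summable_indicator_event hΛ hΛs hμ 1 A
  have hGs : Summable ((A.indicator w) ∘ e) := (Equiv.summable_iff e).2 hFs
  have hGnn : (0 : (Fin 2 → Fin N) × ℕ → ℝ) ≤ (A.indicator w) ∘ e := fun q =>
    Set.indicator_apply_nonneg (fun _ => pathWeight_nonneg hΛ hμ _ _ _)
  have hSc : ∀ c : ℕ, S (fun _ : Fin 1 => c) 1 = c := by
    intro c
    unfold S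
    rw [Fin.sum_univ_one]
    norm_num
  have hval : ∀ (J : Fin 2 → Fin N) (c : ℕ), (A.indicator w) (e (J, c)) =
      if (1 ≤ c ∧ J (Fin.last 1) = j) then delta i (J 0) * Λ c (J 0) (J 1) else 0 := by
    intro J c
    have hmem : e (J, c) ∈ A ↔ (1 ≤ c ∧ J (Fin.last 1) = j) := by
      show ((∀ k, 1 ≤ k → k < 1 → 0 < ((0 : ℕ) : ℤ) + k - S (fun _ : Fin 1 => c) k) ∧
        ((0 : ℕ) : ℤ) + (1 : ℕ) - S (fun _ : Fin 1 => c) 1 ≤ 0 ∧ J (Fin.last 1) = j) ↔ _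
      rw [hSc c]
      constructor
      · rintro ⟨-, h2, h3⟩
        exact ⟨by omega, h3⟩
      · rintro ⟨h1, h2⟩
        exact ⟨fun k hk1 hk2 => by omega, by omega, h2⟩
    have hwval : w (e (J, c)) = delta i (J 0) * Λ c (J 0) (J 1) := by
      show pathWeight Λ (delta i) 1 J (fun _ : Fin 1 => c) = _
      unfold pathWeight
      rw [Fin.prod_univ_one]
      rfl
    show A.indicator w (e (J, c)) = _
    rw [Set.indicator_apply]
    by_cases h : 1 ≤ c ∧ J (Fin.last 1) = j
    · rw [if_pos (hmem.2 h), if_pos h, hwval]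
    · rw [if_neg (fun hh => h (hmem.1 hh)), if_neg h]
  calc ∑' p : Path N 1, A.indicator w p
      = ∑' q : (Fin 2 → Fin N) × ℕ, (A.indicator w) (e q) := (Equiv.tsum_eq e _).symm
    _ = ∑' J : Fin 2 → Fin N, ∑' c : ℕ, (A.indicator w) (e (J, c)) := Summable.tsum_prod' hGs
        (fun J => ((summable_prod_of_nonneg hGnn).1 hGs).1 J)
    _ = ∑ J : Fin 2 → Fin N, ∑' c : ℕ, (A.indicator w) (e (J, c)) := tsum_fintype _
    _ = ∑ J : Fin 2 → Fin N, (if J (Fin.last 1) = j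
          then delta i (J 0) * (P (J 0) (J 1) - Λ 0 (J 0) (J 1)) else 0) := by
        refine Finset.sum_congr rfl fun J _ => ?_
        by_cases hJl : J (Fin.last 1) = j
        · rw [if_pos hJl,
            tsum_congr (fun c => show (A.indicator w) (e (J, c))
                = if 1 ≤ c then delta i (J 0) * Λ c (J 0) (J 1) else 0 from by
              rw [hval J c]
              by_cases hc : 1 ≤ c
              · rw [if_pos ⟨hc, hJl⟩, if_pos hc]
              · rw [if_neg (fun hh : (_ ∧ _) => hc hh.1), if_neg hc]),
            tsum_congr (fun c => show (if 1 ≤ c then delta i (J 0) * Λ c (J 0) (J 1) else 0)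
                = delta i (J 0) * (if 1 ≤ c then Λ c (J 0) (J 1) else 0) from by
              split_ifs <;> ring),
            tsum_mul_left, tail_tsum hΛ hΛs P hP]
        · rw [if_neg hJl, tsum_congr (fun c => by
            rw [hval J c, if_neg (fun hh : (_ ∧ _) => hJl hh.2)]), tsum_zero]
    _ = P i j - Λ 0 i j := by
        refine (Finset.sum_eq_single (![i, j]) (fun J _ hne => ?_)
          (fun h => absurd (Finset.mem_univ _) h)).trans ?_
        · by_cases hJl : J (Fin.last 1) = j
          · by_cases hJ0 : J 0 = i
            · exfalso
              apply hne
              have hJ1 : J 1 = j := hJl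
              have hJe : J = ![J 0, J 1] := by
                funext x
                fin_cases x <;> rfl
              rw [hJe, hJ0, hJ1]
            · rw [if_pos hJl]
              unfold delta
              rw [if_neg hJ0, zero_mul]
          · exact if_neg hJl
        · have h2 : (![i, j] : Fin 2 → Fin N) (Fin.last 1) = j := rfl
          have h3 : (![i, j] : Fin 2 → Fin N) 0 = i := rfl
          have h4 : (![i, j] : Fin 2 → Fin N) 1 = j := rfl
          rw [if_pos h2, h3, h4]
          unfold delta
          rw [if_pos rfl, one_mul]

end One


/-- Distribution of the time to ruin, zero initial surplus.  Assume
`λ_{ij}(0) > 0`, `Λ(0)` invertible, and the environment chain stationary with distribution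
`π`.  With `x = 0`, the matrix of ruin-time probabilities satisfies
`P(τ_0^- = 1, J_1) = P − Λ(0)` and, for `n > 1`,
`P(τ_0^- = n, J_n) = Σ_{x=1}^{n−1} V(n−1,x)·P − Σ_{x=1}^{n} V(n,x)`. -/
theorem ruin_time_distribution_zero
    {N : ℕ} (hN : 1 ≤ N)
    (Λ : ℕ → Matrix (Fin N) (Fin N) ℝ) (P : Matrix (Fin N) (Fin N) ℝ)
    (hΛ : ∀ m i j, 0 ≤ Λ m i j)
    (hP : ∀ i j, HasSum (fun m => Λ m i j) (P i j))
    (hPstoch : ∀ i, ∑ j, P i j = 1)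
    (π : Fin N → ℝ) (hπpos : ∀ i, 0 < π i) (hπsum : ∑ i, π i = 1)
    (hπP : ∀ j, ∑ i, π i * P i j = π j)
    (hzero : ∀ i j, 0 < Λ 0 i j) (hinv : IsUnit (Λ 0)) :
    ruinM Λ 0 1 = P - Λ 0 ∧
      ∀ n, 1 < n → ruinM Λ 0 n =
        (∑ x ∈ Finset.Icc 1 (n - 1), Vmat Λ π (n - 1) x * P) -
          ∑ x ∈ Finset.Icc 1 n, Vmat Λ π n x := by
  have hΛs : ∀ i j, Summable fun m => Λ m i j := fun i j => (hP i j).summable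
  constructor
  · exact Matrix.ext fun i j => by
      rw [Matrix.sub_apply]
      exact ruinM_one hΛ hΛs P hP i j
  · intro n hn
    obtain ⟨m, rfl⟩ : ∃ m, n = m + 1 := ⟨n - 1, by omega⟩
    have hm : 1 ≤ m := by omega
    refine Matrix.ext fun i j => ?_
    rw [Matrix.sub_apply, Matrix.sum_apply, Matrix.sum_apply]
    simp only [Nat.add_sub_cancel]
    have hsplit := prob_split (Λ := Λ) hΛ hΛs m i j
    have hlast := prob_last_step (Λ := Λ) hΛ hΛs P hP m i j
    have hV1 : ∀ l, ∑ x ∈ Finset.Icc 1 m, Vmat Λ π m x i l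
        = prob Λ (delta i) m (fun J C =>
            (∀ k, 1 ≤ k → k ≤ m → 0 < (k : ℤ) - S C k) ∧ J (Fin.last m) = l) :=
      fun l => sum_Vmat hΛ hΛs hπpos hm i l
    have hV2 : ∑ x ∈ Finset.Icc 1 (m + 1), Vmat Λ π (m + 1) x i j
        = prob Λ (delta i) (m + 1) (fun J C =>
            (∀ k, 1 ≤ k → k ≤ m + 1 → 0 < (k : ℤ) - S C k) ∧ J (Fin.last (m + 1)) = j) :=
      sum_Vmat hΛ hΛs hπpos (by omega) i j
    have hR1 : ∑ x ∈ Finset.Icc 1 m, (Vmat Λ π m x * P) i j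
        = ∑ l, (∑ x ∈ Finset.Icc 1 m, Vmat Λ π m x i l) * P l j := by
      rw [Finset.sum_congr rfl (fun x _ => Matrix.mul_apply), Finset.sum_comm]
      exact Finset.sum_congr rfl fun l _ => (Finset.sum_mul _ _ _).symm
    rw [hR1, Finset.sum_congr rfl (fun l _ => by rw [hV1 l]), hV2, ← hlast]
    linarith [hsplit]

end CMB
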